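/- Let T, S be positive contractions on L¹(μ) with T ≤ S and ‖S − T‖ < 1. Then ‖Sⁿ − Tⁿ‖ < 1 for all n ∈ ℕ. -/

import Mathlib

open MeasureTheory Filter

section Aux

variable {X : Type*} [MeasurableSpace X] {μ : Measure X}

lemma norm_eq_integral_of_nonneg (f : Lp ℝ 1 μ) (hf : 0 ≤ f) :
    ‖f‖ = L1.integral f := by
  rw [L1.integral_eq_integral, L1.norm_eq_integral_norm]
  refine integral_congr_ae ?_
  filter_upwards [(Lp.coeFn_nonneg f).2 hf] with a ha
  exact Real.norm_of_nonneg ha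

lemma opNorm_le_of_nonneg (A : Lp ℝ 1 μ →L[ℝ] Lp ℝ 1 μ) {C : ℝ} (hC : 0 ≤ C)
    (hA : ∀ f : Lp ℝ 1 μ, 0 ≤ f → ‖A f‖ ≤ C * ‖f‖) : ‖A‖ ≤ C := by
  haveI : Fact ((1:ENNReal) ≤ 1) := ⟨le_rfl⟩
  refine ContinuousLinearMap.opNorm_le_bound A hC fun f => ?_
  have hnormf : ‖f‖ = ‖f⁺‖ + ‖f⁻‖ := by
    rw [← norm_abs_eq_norm, ← posPart_add_negPart f,
      norm_eq_integral_of_nonneg _ (add_nonneg (posPart_nonneg f) (negPart_nonneg f)),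
      L1.integral_add,
      ← norm_eq_integral_of_nonneg _ (posPart_nonneg f),
      ← norm_eq_integral_of_nonneg _ (negPart_nonneg f)]
  calc ‖A f‖ = ‖A f⁺ - A f⁻‖ := by rw [← map_sub, posPart_sub_negPart]
  _ ≤ ‖A f⁺‖ + ‖A f⁻‖ := norm_sub_le _ _
  _ ≤ C * ‖f⁺‖ + C * ‖f⁻‖ := add_le_add (hA _ (posPart_nonneg f)) (hA _ (negPart_nonneg f))
  _ = C * ‖f‖ := by rw [hnormf]; ring

end Aux

theorem stmt4 {X : Type*} [MeasurableSpace X] (μ : Measure X)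
    (T S : Lp ℝ 1 μ →L[ℝ] Lp ℝ 1 μ)
    (hTpos : ∀ f : Lp ℝ 1 μ, 0 ≤ f → 0 ≤ T f) (hTnorm : ‖T‖ ≤ 1)
    (hSpos : ∀ f : Lp ℝ 1 μ, 0 ≤ f → 0 ≤ S f) (hSnorm : ‖S‖ ≤ 1)
    (hTS : ∀ f : Lp ℝ 1 μ, 0 ≤ f → T f ≤ S f)
    (h : ‖S - T‖ < 1) :
    ∀ n : ℕ, 1 ≤ n → ‖S ^ n - T ^ n‖ < 1 := by
  intro n hn
  set δ : ℝ := ‖S - T‖ with hδdef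
  have hδ0 : 0 ≤ δ := norm_nonneg _
  have hδ1 : δ < 1 := h
  -- integral facts
  have hInonneg : ∀ g : Lp ℝ 1 μ, 0 ≤ g → 0 ≤ L1.integral g := fun g hg => by
    rw [← norm_eq_integral_of_nonneg g hg]; exact norm_nonneg g
  have hIS : ∀ g : Lp ℝ 1 μ, 0 ≤ g → L1.integral (S g) ≤ L1.integral g := fun g hg => by
    rw [← norm_eq_integral_of_nonneg _ (hSpos g hg), ← norm_eq_integral_of_nonneg g hg]
    calc ‖S g‖ ≤ ‖S‖ * ‖g‖ := S.le_opNorm g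
    _ ≤ 1 * ‖g‖ := mul_le_mul_of_nonneg_right hSnorm (norm_nonneg g)
    _ = ‖g‖ := one_mul _
  -- the positive-cone bound
  have key : ∀ f : Lp ℝ 1 μ, 0 ≤ f →
      ‖(S ^ n - T ^ n) f‖ ≤ (1 - (1 - δ) ^ n) * ‖f‖ := by
    intro f hf
    set g : ℕ → Lp ℝ 1 μ := fun k => (T ^ k) f with hgdef
    have hg : ∀ k, 0 ≤ g k := by
      intro k
      induction k with
      | zero => simpa [hgdef] using hf
      | succ k ih =>
        have : g (k + 1) = T (g k) := by
          simp [hgdef, pow_succ', ContinuousLinearMap.mul_apply]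
          rw [← Function.iterate_succ_apply, Function.iterate_succ_apply']
        rw [this]; exact hTpos _ ih
    have hgsucc : ∀ k, g (k + 1) = T (g k) := fun k => by
      simp [hgdef, pow_succ', ContinuousLinearMap.mul_apply]
      rw [← Function.iterate_succ_apply, Function.iterate_succ_apply']
    set a : ℕ → ℝ := fun k => L1.integral (g k) with hadef
    set d : ℕ → ℝ := fun k => L1.integral (S (g k) - T (g k)) with hddef
    have hd0 : ∀ k, 0 ≤ d k := fun k =>
      hInonneg _ (sub_nonneg.2 (hTS _ (hg k)))
    have hdδ : ∀ k, d k ≤ δ * a k := by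
      intro k
      have h1 : d k = ‖S (g k) - T (g k)‖ :=
        (norm_eq_integral_of_nonneg _ (sub_nonneg.2 (hTS _ (hg k)))).symm
      have h2 : a k = ‖g k‖ := (norm_eq_integral_of_nonneg _ (hg k)).symm
      rw [h1, h2]
      calc ‖S (g k) - T (g k)‖ = ‖(S - T) (g k)‖ := by
            rw [ContinuousLinearMap.sub_apply]
      _ ≤ ‖S - T‖ * ‖g k‖ := (S - T).le_opNorm _
    have hasucc : ∀ k, a (k + 1) ≤ a k - d k := by
      intro k
      have heq : a (k + 1) = L1.integral (S (g k)) - d k := by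
        show L1.integral (g (k + 1)) = _
        rw [hgsucc k]
        have : d k = L1.integral (S (g k)) - L1.integral (T (g k)) := by
          show L1.integral (S (g k) - T (g k)) = _
          rw [L1.integral_sub]
        rw [this]
        ring
      rw [heq]
      have := hIS _ (hg k)
      simp only [hadef]
      linarith
    -- positivity and telescoping bound
    have key1 : ∀ m : ℕ, 0 ≤ (S ^ m) f - (T ^ m) f ∧
        L1.integral ((S ^ m) f - (T ^ m) f) ≤ ∑ k ∈ Finset.range m, d k := by
      intro m
      induction m with
      | zero =>
        simp [pow_zero, ContinuousLinearMap.one_apply, sub_self, L1.integral_zero]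
      | succ m ih =>
        have hdecomp : (S ^ (m + 1)) f - (T ^ (m + 1)) f
            = S ((S ^ m) f - (T ^ m) f) + (S (g m) - T (g m)) := by
          rw [map_sub]
          have h1 : (S ^ (m + 1)) f = S ((S ^ m) f) := by
            simp [pow_succ', ContinuousLinearMap.mul_apply]
          have h2 : (T ^ (m + 1)) f = T (g m) := by
            simp [hgdef, pow_succ', ContinuousLinearMap.mul_apply]
          have h3 : g m = (T ^ m) f := rfl
          rw [h1, h2, h3]
          abel
        constructor
        · rw [hdecomp]
          exact add_nonneg (hSpos _ ih.1) (sub_nonneg.2 (hTS _ (hg m)))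
        · rw [hdecomp, L1.integral_add, Finset.sum_range_succ]
          have h4 := hIS _ ih.1
          have h5 := ih.2
          simp only [hddef]
          linarith
    -- bound on sums
    have key2 : ∀ m : ℕ, (∑ k ∈ Finset.range m, d k) ≤ (1 - (1 - δ) ^ m) * a 0 ∧
        a m ≤ a 0 - ∑ k ∈ Finset.range m, d k := by
      intro m
      induction m with
      | zero => simp
      | succ m ih =>
        have hdm := hdδ m
        have ham := hasucc m
        have ha0 : 0 ≤ a 0 := hInonneg _ (hg 0)
        have hp0 : (0:ℝ) ≤ 1 - δ := by linarith
        have hps : (1 - δ) ^ (m + 1) = (1 - δ) * (1 - δ) ^ m := by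
          rw [pow_succ]; ring
        constructor
        · rw [Finset.sum_range_succ, hps]
          have h6 : (1 - δ) * (∑ k ∈ Finset.range m, d k)
              ≤ (1 - δ) * ((1 - (1 - δ) ^ m) * a 0) :=
            mul_le_mul_of_nonneg_left ih.1 hp0
          have h7 : d m ≤ δ * (a 0 - ∑ k ∈ Finset.range m, d k) := by
            have := mul_le_mul_of_nonneg_left ih.2 hδ0
            linarith
          nlinarith
        · rw [Finset.sum_range_succ]
          have := ih.2
          linarith
    -- conclude
    have hfa : ‖f‖ = a 0 := norm_eq_integral_of_nonneg _ hf
    have h8 : ‖(S ^ n - T ^ n) f‖ = L1.integral ((S ^ n) f - (T ^ n) f) := by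
      rw [ContinuousLinearMap.sub_apply]
      exact norm_eq_integral_of_nonneg _ (key1 n).1
    rw [h8, hfa]
    exact le_trans (key1 n).2 (le_trans (key2 n).1 (le_of_eq rfl))
  -- finish
  have hp : 0 < (1 - δ) ^ n := pow_pos (by linarith) n
  have hple : (1 - δ) ^ n ≤ 1 := pow_le_one₀ (by linarith) (by linarith)
  have hC0 : (0:ℝ) ≤ 1 - (1 - δ) ^ n := by linarith
  have := opNorm_le_of_nonneg (S ^ n - T ^ n) hC0 key
  linarith
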